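/- For every set S ⊆ ℝ of nonnegative reals, the class of all finite convexly ordered ultrametric spaces whose set of realized distances is contained in S has the Ramsey property: for every integer k ≥ 2 and all such spaces U and V with U embeddable into V, there exists a finite convexly ordered ultrametric space W with all distances in S such that for every k-coloring of the set of embeddings of U into W there exist an embedding w : V ↪ W and a color i such that w ∘ g has color i for every embedding g : U ↪ V. -/

import Mathlib

/-- A finite convexly ordered ultrametric space: a finite set `U` with an ultrametric `dist`
(a metric satisfying `d(x,z) ≤ max (d(x,y)) (d(y,z))`) and a (strict) linear order `lt` such
that every closed ball is convex with respect to `lt`. -/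
structure ConvOrdUltra where
  U : Type
  finite : Finite U
  dist : U → U → ℝ
  dist_self : ∀ x, dist x x = 0
  eq_of_dist_eq_zero : ∀ x y, dist x y = 0 → x = y
  dist_comm : ∀ x y, dist x y = dist y x
  ultra : ∀ x y z, dist x z ≤ max (dist x y) (dist y z)
  lt : U → U → Prop
  lt_irrefl : ∀ x, ¬ lt x x
  lt_trans : ∀ x y z, lt x y → lt y z → lt x z
  lt_total : ∀ x y, lt x y ∨ x = y ∨ lt y x
  convex : ∀ u r x y z, dist u x ≤ r → dist u y ≤ r → lt x z → lt z y → dist u z ≤ r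

/-- An embedding of convexly ordered ultrametric spaces: an injective map preserving
distances and the linear orders. -/
def ConvOrdUltra.Emb (X Y : ConvOrdUltra) (f : X.U → Y.U) : Prop :=
  Function.Injective f ∧
  (∀ a b, Y.dist (f a) (f b) = X.dist a b) ∧
  (∀ a b, X.lt a b → Y.lt (f a) (f b))

namespace COURamsey

/-- Strictly monotone maps between `Fin` types. -/
def Mono (a b : ℕ) : Type := {f : Fin a → Fin b // StrictMono f}

def Mono.comp {a b c : ℕ} (f : Mono b c) (g : Mono a b) : Mono a c :=
  ⟨f.1 ∘ g.1, f.2.comp g.2⟩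

@[simp] lemma Mono.comp_apply {a b c : ℕ} (f : Mono b c) (g : Mono a b) (x : Fin a) :
    (f.comp g).1 x = f.1 (g.1 x) := rfl

def Mono.id (a : ℕ) : Mono a a := ⟨fun x => x, strictMono_id⟩

def mzero (b : ℕ) : Mono 0 b := ⟨Fin.elim0, fun x => x.elim0⟩

lemma mono0_eq {b : ℕ} (f g : Mono 0 b) : f = g := by
  apply Subtype.ext; funext x; exact x.elim0

def msucc {a b : ℕ} (f : Mono a b) : Mono a (b + 1) :=
  ⟨fun x => (f.1 x).succ, fun x y h => Fin.succ_lt_succ_iff.mpr (f.2 h)⟩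

def mcons {a b : ℕ} (f : Mono a b) : Mono (a + 1) (b + 1) :=
  ⟨Fin.cases 0 (fun t => (f.1 t).succ), by
    intro x y hxy
    rcases Fin.eq_zero_or_eq_succ x with rfl | ⟨x', rfl⟩ <;>
      rcases Fin.eq_zero_or_eq_succ y with rfl | ⟨y', rfl⟩
    · exact absurd hxy (lt_irrefl _)
    · simp only [Fin.cases_zero, Fin.cases_succ]; exact Fin.succ_pos _
    · exact (Fin.not_lt_zero _ hxy).elim
    · simp only [Fin.cases_succ]
      exact Fin.succ_lt_succ_iff.mpr (f.2 (Fin.succ_lt_succ_iff.mp hxy))⟩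

@[simp] lemma mcons_zero {a b : ℕ} (f : Mono a b) : (mcons f).1 0 = 0 := rfl

@[simp] lemma mcons_succ {a b : ℕ} (f : Mono a b) (t : Fin a) :
    (mcons f).1 t.succ = (f.1 t).succ := by
  simp [mcons]

/-- Classical finite Ramsey theorem, in terms of strictly monotone maps. -/
theorem ramseyM : ∀ (r : ℕ) (κ : Type) [Fintype κ] [Nonempty κ] (L : ℕ),
    ∃ N, ∀ χ : Mono r N → κ, ∃ (H : Mono L N) (i : κ),
      ∀ g : Mono r L, χ (H.comp g) = i := by
  intro r
  induction r with
  | zero =>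
    intro κ _ _ L
    refine ⟨L, fun χ => ⟨Mono.id L, χ (mzero L), fun g => ?_⟩⟩
    exact congrArg χ (mono0_eq _ _)
  | succ r IH =>
    intro κ _ _ L
    -- tail-homogeneous sequence lemma
    have seq : ∀ T : ℕ, ∃ N, ∀ χ : Mono (r + 1) N → κ,
        ∃ (a : Mono T N) (c : Fin T → κ), ∀ g : Mono (r + 1) T,
          χ (a.comp g) = c (g.1 0) := by
      intro T
      induction T with
      | zero =>
        exact ⟨0, fun χ => ⟨mzero 0, Fin.elim0, fun g => (g.1 0).elim0⟩⟩
      | succ T IHT =>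
        obtain ⟨N', hN'⟩ := IHT
        obtain ⟨N₀, hN₀⟩ := IH κ N'
        refine ⟨N₀ + 1, fun χ => ?_⟩
        -- color of r-sets together with new first point 0
        obtain ⟨M, c₀, hM⟩ := hN₀ (fun h => χ (mcons h))
        obtain ⟨a', c', ha'⟩ := hN' (fun h => χ (msucc (M.comp h)))
        refine ⟨mcons (M.comp a'), Fin.cases c₀ c', fun g => ?_⟩
        by_cases h0 : g.1 0 = 0
        · -- first point of g is the new point
          have hne : ∀ t : Fin r, g.1 t.succ ≠ 0 := by
            intro t h
            have : g.1 0 < g.1 t.succ := g.2 (Fin.succ_pos t)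
            rw [h, h0] at this; exact lt_irrefl _ this
          set gt : Mono r T := ⟨fun t => (g.1 t.succ).pred (hne t), by
            intro x y hxy
            have := g.2 (Fin.succ_lt_succ_iff.mpr hxy)
            exact Fin.pred_lt_pred_iff.mpr this⟩ with hgt
          have key : (mcons (M.comp a')).comp g = mcons (M.comp (a'.comp gt)) := by
            apply Subtype.ext; funext x
            rcases Fin.eq_zero_or_eq_succ x with rfl | ⟨x', rfl⟩
            · simp only [Mono.comp_apply, h0, mcons_zero]
            · have h1 : g.1 x'.succ = (gt.1 x').succ := (Fin.succ_pred (g.1 x'.succ) (hne x')).symm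
              show (mcons (M.comp a')).1 (g.1 x'.succ) = (mcons (M.comp (a'.comp gt))).1 x'.succ
              rw [h1, mcons_succ, mcons_succ]
              rfl
          rw [key, h0]
          simpa using hM (a'.comp gt)
        · -- g avoids the new point
          have hne : ∀ x : Fin (r + 1), g.1 x ≠ 0 := by
            intro x h
            have : g.1 0 ≤ g.1 x := g.2.monotone (Fin.zero_le x)
            rw [h] at this
            exact h0 (Fin.le_zero_iff.mp this)
          set gh : Mono (r + 1) T := ⟨fun x => (g.1 x).pred (hne x), by
            intro x y hxy
            exact Fin.pred_lt_pred_iff.mpr (g.2 hxy)⟩ with hgh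
          have key : (mcons (M.comp a')).comp g = msucc (M.comp (a'.comp gh)) := by
            apply Subtype.ext; funext x
            have h1 : g.1 x = (gh.1 x).succ := (Fin.succ_pred (g.1 x) (hne x)).symm
            show (mcons (M.comp a')).1 (g.1 x) = (msucc (M.comp (a'.comp gh))).1 x
            rw [h1, mcons_succ]
            rfl
          rw [key]
          have harg : g.1 0 = (gh.1 0).succ := (Fin.succ_pred (g.1 0) (hne 0)).symm
          rw [harg]
          simp only [Fin.cases_succ]
          exact ha' gh
    obtain ⟨N, hN⟩ := seq (Fintype.card κ * L + 1)
    refine ⟨N, fun χ => ?_⟩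
    classical
    obtain ⟨a, c, ha⟩ := hN χ
    have hpigeon : ∃ i : κ, L < (Finset.univ.filter fun t => c t = i).card := by
      apply Fintype.exists_lt_card_fiber_of_mul_lt_card (f := c)
      simp [Nat.lt_succ_iff]
    obtain ⟨i, hi⟩ := hpigeon
    obtain ⟨S, hSsub, hScard⟩ := Finset.exists_subset_card_eq hi.le
    set E : Mono L (Fintype.card κ * L + 1) :=
      ⟨fun x => S.orderEmbOfFin hScard x, (S.orderEmbOfFin hScard).strictMono⟩ with hE
    refine ⟨a.comp E, i, fun g => ?_⟩
    have assoc : (a.comp E).comp g = a.comp (E.comp g) := rfl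
    rw [assoc, ha]
    have hmem : (E.comp g).1 0 ∈ S := by
      exact Finset.orderEmbOfFin_mem S hScard (g.1 0)
    have := hSsub hmem
    simpa using (Finset.mem_filter.mp this).2

/-- Product Ramsey theorem. -/
theorem prodRamsey : ∀ (m : ℕ) (n L : ℕ) (κ : Type) [Fintype κ] [Nonempty κ],
    ∃ N, ∀ χ : (∀ _ : Fin m, Mono n N) → κ,
      ∃ (H : ∀ _ : Fin m, Mono L N) (i : κ),
        ∀ g : ∀ _ : Fin m, Mono n L, χ (fun j => (H j).comp (g j)) = i := by
  intro m
  induction m with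
  | zero =>
    intro n L κ _ _
    refine ⟨0, fun χ => ⟨fun j => j.elim0, χ (fun j => j.elim0), fun g => ?_⟩⟩
    congr 1; funext j; exact j.elim0
  | succ m IH =>
    intro n L κ _ _
    obtain ⟨N', hN'⟩ := IH n L κ
    haveI : DecidableEq (Fin n → Fin N') := by infer_instance
    haveI : DecidablePred (@StrictMono (Fin n) (Fin N') _ _) := by
      intro f
      exact decidable_of_iff (∀ a b, a < b → f a < f b)
        ⟨fun h {a b} hab => h a b hab, fun h a b hab => h hab⟩
    haveI : Fintype (Mono n N') := by unfold Mono; infer_instance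
    haveI : DecidableEq (Mono n N') := Subtype.instDecidableEq
    obtain ⟨N₀, hN₀⟩ := ramseyM n ((∀ _ : Fin m, Mono n N') → κ) L
    refine ⟨max N₀ N', fun χ => ?_⟩
    set c₁ : Mono N₀ (max N₀ N') := ⟨Fin.castLE (le_max_left _ _), fun x y h => h⟩ with hc₁
    set c₂ : Mono N' (max N₀ N') := ⟨Fin.castLE (le_max_right _ _), fun x y h => h⟩ with hc₂
    set χ₀ : Mono n N₀ → ((∀ _ : Fin m, Mono n N') → κ) :=
      fun h0 => fun g' => χ (Fin.cons (c₁.comp h0) (fun j => c₂.comp (g' j)) : Fin (m+1) → Mono n (max N₀ N')) with hχ₀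
    obtain ⟨H₀, cc, hH₀⟩ := hN₀ χ₀
    obtain ⟨H', i, hH'⟩ := hN' cc
    refine ⟨(Fin.cons (c₁.comp H₀) (fun j => c₂.comp (H' j)) : Fin (m+1) → Mono L (max N₀ N')), i, fun g => ?_⟩
    have key : (fun j => ((Fin.cons (c₁.comp H₀) (fun j => c₂.comp (H' j)) : Fin (m+1) → Mono L (max N₀ N')) j).comp (g j))
        = (Fin.cons (c₁.comp (H₀.comp (g 0))) (fun j => c₂.comp ((H' j).comp (g j.succ))) : Fin (m+1) → Mono n (max N₀ N')) := by
      funext j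
      rcases Fin.eq_zero_or_eq_succ j with rfl | ⟨j', rfl⟩
      · simp [Fin.cons_zero]; rfl
      · simp [Fin.cons_succ]; rfl
    rw [key]
    have e1 := hH₀ (g 0)
    have e2 := hH' (fun j => g j.succ)
    calc χ (Fin.cons (c₁.comp (H₀.comp (g 0))) fun j => c₂.comp ((H' j).comp (g j.succ)))
        = χ₀ (H₀.comp (g 0)) (fun j => (H' j).comp (g j.succ)) := rfl
      _ = cc (fun j => (H' j).comp (g j.succ)) := by rw [e1]
      _ = i := e2

end COURamsey

namespace COURamsey

open Classical in
lemma dist_nonneg' (Z : ConvOrdUltra) (x y : Z.U) : 0 ≤ Z.dist x y := by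
  have h := Z.ultra x y x
  rw [Z.dist_self, Z.dist_comm y x] at h
  simpa using h

lemma lt_asymm' (Z : ConvOrdUltra) {a b : Z.U} (h : Z.lt a b) (h' : Z.lt b a) : False :=
  Z.lt_irrefl a (Z.lt_trans _ _ _ h h')

noncomputable def linOrd (Z : ConvOrdUltra) : LinearOrder Z.U where
  le a b := Z.lt a b ∨ a = b
  lt := Z.lt
  le_refl a := Or.inr rfl
  le_trans a b c hab hbc := by
    rcases hab with h | rfl
    · rcases hbc with h' | rfl
      · exact Or.inl (Z.lt_trans _ _ _ h h')
      · exact Or.inl h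
    · exact hbc
  lt_iff_le_not_ge a b := by
    constructor
    · intro h
      refine ⟨Or.inl h, ?_⟩
      rintro (h' | rfl)
      · exact lt_asymm' Z h h'
      · exact Z.lt_irrefl _ h
    · rintro ⟨h | rfl, h2⟩
      · exact h
      · exact absurd (Or.inr rfl) h2
  le_antisymm a b hab hba := by
    rcases hab with h | rfl
    · rcases hba with h' | rfl
      · exact absurd h' (fun h' => lt_asymm' Z h h')
      · rfl
    · rfl
  le_total a b := by
    rcases Z.lt_total a b with h | rfl | h
    · exact Or.inl (Or.inl h)
    · exact Or.inl (Or.inr rfl)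
    · exact Or.inr (Or.inl h)
  toDecidableLE := Classical.decRel _

lemma exists_enum (Z : ConvOrdUltra) : ∃ (n : ℕ) (e : Fin n → Z.U),
    Function.Bijective e ∧ (∀ i i' : Fin n, i < i' → Z.lt (e i) (e i')) := by
  haveI := Z.finite
  haveI : Fintype Z.U := Fintype.ofFinite _
  letI := linOrd Z
  refine ⟨Fintype.card Z.U, fun i => monoEquivOfFin Z.U rfl i,
    (monoEquivOfFin Z.U rfl).toEquiv.bijective, ?_⟩
  intro i i' h
  exact (monoEquivOfFin Z.U rfl).strictMono h

noncomputable section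

open Classical

/-! ### Gap and coordinate analysis for an enumerated space -/

variable (Z : ConvOrdUltra) {n : ℕ} (e : Fin n → Z.U)

/-- consecutive gap distances -/
def gp (t : ℕ) : ℝ :=
  if h : t + 1 < n then Z.dist (e ⟨t, Nat.lt_of_succ_lt h⟩) (e ⟨t + 1, h⟩) else 0

/-- number of gaps of size `≥ s` before index `i` -/
def wcoord (s : ℝ) (i : ℕ) : ℕ := ((Finset.range i).filter (fun t => s ≤ gp Z e t)).card

lemma wcoord_le (s : ℝ) (i : ℕ) : wcoord Z e s i ≤ i := by
  calc ((Finset.range i).filter (fun t => s ≤ gp Z e t)).card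
      ≤ (Finset.range i).card := Finset.card_filter_le _ _
    _ = i := Finset.card_range i

lemma wcoord_mono (s : ℝ) {i i' : ℕ} (h : i ≤ i') : wcoord Z e s i ≤ wcoord Z e s i' :=
  Finset.card_le_card (Finset.filter_subset_filter _ (Finset.range_subset_range.mpr h))

lemma wcoord_zero (s : ℝ) : wcoord Z e s 0 = 0 := by simp [wcoord]

lemma wcoord_succ (s : ℝ) (i : ℕ) :
    wcoord Z e s (i + 1) = wcoord Z e s i + (if s ≤ gp Z e i then 1 else 0) := by
  rw [wcoord, wcoord, Finset.range_add_one, Finset.filter_insert]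
  by_cases h : s ≤ gp Z e i
  · rw [if_pos h, if_pos h, Finset.card_insert_of_notMem (by simp)]
  · rw [if_neg h, if_neg h]; omega

lemma wcoord_ivt (s : ℝ) (i v : ℕ) (h : v ≤ wcoord Z e s i) :
    ∃ i' ≤ i, wcoord Z e s i' = v := by
  induction i with
  | zero =>
    refine ⟨0, le_refl _, ?_⟩
    rw [wcoord_zero] at h ⊢
    omega
  | succ i IH =>
    by_cases hv : v ≤ wcoord Z e s i
    · obtain ⟨i', h1, h2⟩ := IH hv
      exact ⟨i', Nat.le_succ_of_le h1, h2⟩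
    · refine ⟨i + 1, le_refl _, ?_⟩
      rw [wcoord_succ] at h ⊢
      by_cases hgp : s ≤ gp Z e i
      · rw [if_pos hgp] at h ⊢; omega
      · rw [if_neg hgp] at h; omega

variable (hmono : ∀ i i' : Fin n, i < i' → Z.lt (e i) (e i'))

include hmono in
lemma gap_le_dist (i i' : Fin n) (t : ℕ) (h1 : i.1 ≤ t) (h2 : t < i'.1) :
    gp Z e t ≤ Z.dist (e i) (e i') := by
  have ht1 : t + 1 < n := lt_of_le_of_lt (Nat.succ_le_of_lt h2) i'.2
  have htn : t < n := Nat.lt_of_succ_lt ht1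
  rw [gp, dif_pos ht1]
  set d := Z.dist (e i) (e i') with hd
  have hd0 : 0 ≤ d := dist_nonneg' Z _ _
  have hA : Z.dist (e i) (e ⟨t, htn⟩) ≤ d := by
    rcases eq_or_lt_of_le h1 with heq | hlt
    · have : i = ⟨t, htn⟩ := Fin.ext heq
      rw [← this, Z.dist_self]; exact hd0
    · exact Z.convex (e i) d (e i) (e i') (e ⟨t, htn⟩)
        (by rw [Z.dist_self]; exact hd0) (le_refl d)
        (hmono i ⟨t, htn⟩ (show i < ⟨t, htn⟩ by rw [Fin.lt_def]; exact hlt))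
        (hmono ⟨t, htn⟩ i' (show (⟨t, htn⟩ : Fin n) < i' by rw [Fin.lt_def]; exact h2))
  have hB : Z.dist (e i) (e ⟨t + 1, ht1⟩) ≤ d := by
    rcases eq_or_lt_of_le (Nat.succ_le_of_lt h2) with heq | hlt
    · have : i' = ⟨t + 1, ht1⟩ := Fin.ext heq.symm
      rw [← this]
    · exact Z.convex (e i) d (e i) (e i') (e ⟨t + 1, ht1⟩)
        (by rw [Z.dist_self]; exact hd0) (le_refl d)
        (hmono i ⟨t + 1, ht1⟩ (show i < ⟨t + 1, ht1⟩ by rw [Fin.lt_def]; exact Nat.lt_succ_of_le h1))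
        (hmono ⟨t + 1, ht1⟩ i' (show (⟨t + 1, ht1⟩ : Fin n) < i' by rw [Fin.lt_def]; exact hlt))
  calc Z.dist (e ⟨t, htn⟩) (e ⟨t + 1, ht1⟩)
      ≤ max (Z.dist (e ⟨t, htn⟩) (e i)) (Z.dist (e i) (e ⟨t + 1, ht1⟩)) := Z.ultra _ _ _
    _ = max (Z.dist (e i) (e ⟨t, htn⟩)) (Z.dist (e i) (e ⟨t + 1, ht1⟩)) := by rw [Z.dist_comm]
    _ ≤ d := max_le hA hB

include hmono in
lemma dist_le_of_gaps (c : ℕ) : ∀ (i i' : Fin n), i'.1 = i.1 + c → ∀ (r : ℝ), 0 ≤ r →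
    (∀ t, i.1 ≤ t → t < i'.1 → gp Z e t ≤ r) → Z.dist (e i) (e i') ≤ r := by
  induction c with
  | zero =>
    intro i i' hii' r hr _
    have : i = i' := Fin.ext (by omega)
    rw [this, Z.dist_self]; exact hr
  | succ c IH =>
    intro i i' hii' r hr h
    have hmidlt : i.1 + c < n := by have := i'.2; omega
    set mid : Fin n := ⟨i.1 + c, hmidlt⟩ with hmid
    have hmv : mid.1 = i.1 + c := rfl
    have h1 : Z.dist (e i) (e mid) ≤ r := IH i mid rfl r hr (fun t ht1 ht2 => h t ht1 (by omega))
    have h2 : Z.dist (e mid) (e i') ≤ r := by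
      have hgp : gp Z e (i.1 + c) ≤ r := h _ (by omega) (by omega)
      have ht1 : i.1 + c + 1 < n := by have := i'.2; omega
      rw [gp, dif_pos ht1] at hgp
      have e1 : (⟨i.1 + c, Nat.lt_of_succ_lt ht1⟩ : Fin n) = mid := rfl
      have e2 : (⟨i.1 + c + 1, ht1⟩ : Fin n) = i' := Fin.ext (show i.1 + c + 1 = i'.1 by omega)
      rwa [e1, e2] at hgp
    calc Z.dist (e i) (e i') ≤ max (Z.dist (e i) (e mid)) (Z.dist (e mid) (e i')) := Z.ultra _ _ _
      _ ≤ r := max_le h1 h2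

include hmono in
lemma wcoord_eq_iff (i i' : Fin n) (hlt : i < i') (s : ℝ) (hs : 0 < s) :
    wcoord Z e s i.1 = wcoord Z e s i'.1 ↔ Z.dist (e i) (e i') < s := by
  have hsplit : wcoord Z e s i'.1 = wcoord Z e s i.1 +
      ((Finset.Ico i.1 i'.1).filter (fun t => s ≤ gp Z e t)).card := by
    rw [wcoord, wcoord, Finset.range_eq_Ico,
      ← Finset.Ico_union_Ico_eq_Ico (Nat.zero_le i.1) (le_of_lt hlt), Finset.filter_union,
      Finset.card_union_of_disjoint]
    · rw [Finset.range_eq_Ico]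
    exact Finset.disjoint_filter_filter (p := fun t => s ≤ gp Z e t) (q := fun t => s ≤ gp Z e t)
      (Finset.Ico_disjoint_Ico_consecutive 0 i.1 i'.1)
  constructor
  · intro heq
    have hcard : ((Finset.Ico i.1 i'.1).filter (fun t => s ≤ gp Z e t)).card = 0 := by omega
    have hempty := Finset.card_eq_zero.mp hcard
    have hgaps : ∀ t, i.1 ≤ t → t < i'.1 → gp Z e t < s := by
      intro t ht1 ht2
      by_contra hc
      push_neg at hc
      have : t ∈ (Finset.Ico i.1 i'.1).filter (fun t => s ≤ gp Z e t) :=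
        Finset.mem_filter.mpr ⟨Finset.mem_Ico.mpr ⟨ht1, ht2⟩, hc⟩
      rw [hempty] at this
      exact absurd this (Finset.notMem_empty t)
    -- take the max of the gaps
    have hne : (Finset.Ico i.1 i'.1).Nonempty := ⟨i.1, Finset.mem_Ico.mpr ⟨le_refl _, hlt⟩⟩
    set img := (Finset.Ico i.1 i'.1).image (gp Z e) with himg
    have hine : img.Nonempty := hne.image _
    set r := img.max' hine with hr
    obtain ⟨t₀, ht₀mem, ht₀⟩ := Finset.mem_image.mp (img.max'_mem hine)
    rw [Finset.mem_Ico] at ht₀mem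
    have hr0 : 0 ≤ r := by
      rw [hr, ← ht₀]
      have ht1 : t₀ + 1 < n := lt_of_le_of_lt (Nat.succ_le_of_lt ht₀mem.2) i'.2
      rw [gp, dif_pos ht1]
      exact dist_nonneg' Z _ _
    have hrs : r < s := by rw [hr, ← ht₀]; exact hgaps t₀ ht₀mem.1 ht₀mem.2
    have := dist_le_of_gaps Z e hmono (i'.1 - i.1) i i' (by omega) r hr0
      (fun t ht1 ht2 => Finset.le_max' img _ (Finset.mem_image_of_mem _ (Finset.mem_Ico.mpr ⟨ht1, ht2⟩)))
    exact lt_of_le_of_lt this hrs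
  · intro hd
    have : ((Finset.Ico i.1 i'.1).filter (fun t => s ≤ gp Z e t)).card = 0 := by
      rw [Finset.card_eq_zero, Finset.filter_eq_empty_iff]
      intro t ht
      rw [Finset.mem_Ico] at ht
      push_neg
      exact lt_of_le_of_lt (gap_le_dist Z e hmono i i' t ht.1 ht.2) hd
    omega

include hmono in
lemma wcoord_lt_iff (i i' : Fin n) (hlt : i < i') (s : ℝ) (hs : 0 < s) :
    wcoord Z e s i.1 < wcoord Z e s i'.1 ↔ s ≤ Z.dist (e i) (e i') := by
  have hm := wcoord_mono Z e s (le_of_lt hlt)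
  constructor
  · intro h
    by_contra hc
    push_neg at hc
    have := (wcoord_eq_iff Z e hmono i i' hlt s hs).mpr hc
    omega
  · intro h
    have : ¬ (wcoord Z e s i.1 = wcoord Z e s i'.1) := by
      intro hc
      have := (wcoord_eq_iff Z e hmono i i' hlt s hs).mp hc
      linarith
    omega

end

end COURamsey

namespace COURamsey

noncomputable section
open Classical

variable {m N : ℕ}

/-- lexicographic order on grid points -/
def glt (x y : Fin m → Fin N) : Prop := ∃ j, (∀ j' < j, x j' = y j') ∧ x j < y j

def fdset (x y : Fin m → Fin N) : Finset (Fin m) := Finset.univ.filter (fun j => x j ≠ y j)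

lemma fdset_nonempty {x y : Fin m → Fin N} (h : x ≠ y) : (fdset x y).Nonempty := by
  obtain ⟨j, hj⟩ := Function.ne_iff.mp h
  exact ⟨j, Finset.mem_filter.mpr ⟨Finset.mem_univ _, hj⟩⟩

/-- first differing coordinate -/
def fd (x y : Fin m → Fin N) (h : x ≠ y) : Fin m := (fdset x y).min' (fdset_nonempty h)

lemma fd_mem {x y : Fin m → Fin N} (h : x ≠ y) : x (fd x y h) ≠ y (fd x y h) := by
  have := (fdset x y).min'_mem (fdset_nonempty h)
  exact (Finset.mem_filter.mp this).2

lemma fd_min {x y : Fin m → Fin N} (h : x ≠ y) {j} (hj : x j ≠ y j) : fd x y h ≤ j :=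
  Finset.min'_le (fdset x y) j (Finset.mem_filter.mpr ⟨Finset.mem_univ _, hj⟩)

lemma fd_eq_below {x y : Fin m → Fin N} (h : x ≠ y) {j} (hj : j < fd x y h) : x j = y j := by
  by_contra hc
  exact absurd (fd_min h hc) (not_le.mpr hj)

lemma glt_iff {x y : Fin m → Fin N} (h : x ≠ y) :
    glt x y ↔ x (fd x y h) < y (fd x y h) := by
  constructor
  · rintro ⟨j, hb, hj⟩
    have h1 : fd x y h ≤ j := fd_min h (ne_of_lt hj)
    rcases eq_or_lt_of_le h1 with heq | hlt
    · rw [heq]; exact hj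
    · exact absurd (hb _ hlt) (fd_mem h)
  · intro hlt
    exact ⟨fd x y h, fun j' hj' => fd_eq_below h hj', hlt⟩

lemma glt_total' {x y : Fin m → Fin N} (h : x ≠ y) : glt x y ∨ glt y x := by
  have hfd := fd_mem h
  rcases lt_or_gt_of_ne hfd with h1 | h1
  · exact Or.inl ⟨fd x y h, fun j' hj' => fd_eq_below h hj', h1⟩
  · exact Or.inr ⟨fd x y h, fun j' hj' => (fd_eq_below h hj').symm, h1⟩

lemma glt_irrefl (x : Fin m → Fin N) : ¬ glt x x := by
  rintro ⟨j, _, hj⟩; exact lt_irrefl _ hj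

lemma glt_ne {x y : Fin m → Fin N} (h : glt x y) : x ≠ y := by
  rintro rfl; exact glt_irrefl x h

lemma glt_trans' {x y z : Fin m → Fin N} (h1 : glt x y) (h2 : glt y z) : glt x z := by
  obtain ⟨j1, hb1, hj1⟩ := h1
  obtain ⟨j2, hb2, hj2⟩ := h2
  rcases lt_trichotomy j1 j2 with h | h | h
  · exact ⟨j1, fun j' hj' => (hb1 j' hj').trans (hb2 j' (hj'.trans h)),
      lt_of_lt_of_le hj1 (le_of_eq (hb2 j1 h))⟩
  · subst h
    exact ⟨j1, fun j' hj' => (hb1 j' hj').trans (hb2 j' hj'), hj1.trans hj2⟩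
  · exact ⟨j2, fun j' hj' => (hb1 j' (hj'.trans h)).trans (hb2 j' hj'),
      lt_of_le_of_lt (le_of_eq (hb1 j2 h)) hj2⟩

def gdist (s : Fin m → ℝ) (x y : Fin m → Fin N) : ℝ :=
  if h : x = y then 0 else s (fd x y h)

lemma gdist_nonneg' {s : Fin m → ℝ} (hpos : ∀ j, 0 < s j) (x y : Fin m → Fin N) :
    0 ≤ gdist s x y := by
  rw [gdist]
  split
  · exact le_refl 0
  · exact le_of_lt (hpos _)

lemma gdist_comm' {s : Fin m → ℝ} (x y : Fin m → Fin N) : gdist s x y = gdist s y x := by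
  rcases eq_or_ne x y with rfl | h
  · rfl
  · rw [gdist, gdist, dif_neg h, dif_neg h.symm]
    congr 1
    apply le_antisymm
    · exact fd_min h (Ne.symm (fd_mem h.symm))
    · exact fd_min h.symm (Ne.symm (fd_mem h))

lemma gultra {s : Fin m → ℝ} (hanti : StrictAnti s) (hpos : ∀ j, 0 < s j)
    (x y z : Fin m → Fin N) : gdist s x z ≤ max (gdist s x y) (gdist s y z) := by
  rcases eq_or_ne x z with rfl | hxz
  · rw [gdist, dif_pos rfl]
    exact le_max_of_le_left (gdist_nonneg' hpos _ _)
  rcases eq_or_ne x y with rfl | hxy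
  · exact le_max_right _ _
  rcases eq_or_ne y z with rfl | hyz
  · exact le_max_left _ _
  rw [gdist, gdist, gdist, dif_neg hxz, dif_neg hxy, dif_neg hyz]
  have key : fd x y hxy ≤ fd x z hxz ∨ fd y z hyz ≤ fd x z hxz := by
    by_contra hc
    push_neg at hc
    have h1 : x (fd x z hxz) = y (fd x z hxz) := fd_eq_below hxy hc.1
    have h2 : y (fd x z hxz) = z (fd x z hxz) := fd_eq_below hyz hc.2
    exact fd_mem hxz (h1.trans h2)
  rcases key with h | h
  · exact le_max_of_le_left (hanti.antitone h)
  · exact le_max_of_le_right (hanti.antitone h)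

def gridSpace (m N : ℕ) (s : Fin m → ℝ) (hanti : StrictAnti s) (hpos : ∀ j, 0 < s j) :
    ConvOrdUltra where
  U := Fin m → Fin N
  finite := by infer_instance
  dist := gdist s
  dist_self x := dif_pos rfl
  eq_of_dist_eq_zero x y h := by
    by_contra hne
    rw [gdist, dif_neg hne] at h
    exact absurd h (ne_of_gt (hpos _))
  dist_comm x y := gdist_comm' x y
  ultra := gultra hanti hpos
  lt := glt
  lt_irrefl := glt_irrefl
  lt_trans x y z := glt_trans'
  lt_total x y := by
    rcases eq_or_ne x y with rfl | h
    · exact Or.inr (Or.inl rfl)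
    · rcases glt_total' h with h1 | h1
      · exact Or.inl h1
      · exact Or.inr (Or.inr h1)
  convex u r x y z hux huy hxz hzy := by
    have hxz' := glt_ne hxz
    have hxy' : x ≠ y := glt_ne (glt_trans' hxz hzy)
    have key1 : gdist s x z ≤ gdist s x y := by
      rw [gdist, gdist, dif_neg hxz', dif_neg hxy']
      apply hanti.antitone
      by_contra hc
      push_neg at hc
      have hxyeq : x (fd x z hxz') = y (fd x z hxz') := fd_eq_below hxy' hc
      have hxlt : x (fd x z hxz') < z (fd x z hxz') := (glt_iff hxz').mp hxz
      have hyz : glt y z := ⟨fd x z hxz',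
        fun j' hj' => (fd_eq_below hxy' (hj'.trans hc)).symm.trans (fd_eq_below hxz' hj'),
        by rw [← hxyeq]; exact hxlt⟩
      exact glt_irrefl z (glt_trans' hzy hyz)
    have key2 : gdist s x y ≤ r := by
      calc gdist s x y ≤ max (gdist s x u) (gdist s u y) := gultra hanti hpos _ _ _
        _ ≤ r := max_le (by rw [gdist_comm']; exact hux) huy
    calc gdist s u z ≤ max (gdist s u x) (gdist s x z) := gultra hanti hpos _ _ _
      _ ≤ r := max_le hux (le_trans key1 key2)

end

end COURamsey

open COURamsey

/-- For every set `S ⊆ ℝ` of nonnegative reals, the class of all finite convexly ordered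
ultrametric spaces with all realized distances in `S` has the Ramsey property. -/
theorem convexlyOrderedUltrametric_S_ramsey (S : Set ℝ) (hS : ∀ x ∈ S, 0 ≤ x)
    (k : ℕ) (hk : 2 ≤ k) (X Y : ConvOrdUltra)
    (hX : ∀ a b, X.dist a b ∈ S) (hY : ∀ a b, Y.dist a b ∈ S)
    (hXY : ∃ f, ConvOrdUltra.Emb X Y f) :
    ∃ W : ConvOrdUltra, (∀ a b, W.dist a b ∈ S) ∧
      ∀ χ : (X.U → W.U) → Fin k,
        ∃ w, ConvOrdUltra.Emb Y W w ∧ ∃ i : Fin k,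
          ∀ g, ConvOrdUltra.Emb X Y g → χ (w ∘ g) = i := by
  classical
  obtain ⟨f₀, hf₀⟩ := hXY
  by_cases hYE : IsEmpty Y.U
  · haveI := hYE
    haveI : IsEmpty X.U := ⟨fun x => hYE.false (f₀ x)⟩
    refine ⟨Y, hY, fun χ => ⟨id, ⟨Function.injective_id, fun a b => rfl, fun a b h => h⟩,
      χ (fun x => isEmptyElim x), fun g hg => ?_⟩⟩
    congr 1
    funext x
    exact isEmptyElim x
  have hYne : Nonempty Y.U := not_isEmpty_iff.mp hYE
  have h0S : (0 : ℝ) ∈ S := by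
    obtain ⟨y⟩ := hYne
    have := hY y y
    rwa [Y.dist_self] at this
  haveI : Fintype X.U := @Fintype.ofFinite _ X.finite
  haveI : Fintype Y.U := @Fintype.ofFinite _ Y.finite
  -- the set of nonzero distances
  set F : Finset ℝ := ((Finset.univ ×ˢ Finset.univ).image (fun p : X.U × X.U => X.dist p.1 p.2) ∪
    (Finset.univ ×ˢ Finset.univ).image (fun p : Y.U × Y.U => Y.dist p.1 p.2)).filter
      (fun d => d ≠ 0) with hF
  have hFS : ∀ d ∈ F, d ∈ S ∧ d ≠ 0 := by
    intro d hd
    rw [hF, Finset.mem_filter] at hd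
    refine ⟨?_, hd.2⟩
    rcases Finset.mem_union.mp hd.1 with h | h <;> obtain ⟨p, _, rfl⟩ := Finset.mem_image.mp h
    · exact hX p.1 p.2
    · exact hY p.1 p.2
  have hFpos : ∀ d ∈ F, 0 < d := fun d hd =>
    lt_of_le_of_ne (hS d (hFS d hd).1) (Ne.symm (hFS d hd).2)
  set m := F.card with hm
  set s : Fin m → ℝ := fun j => F.orderEmbOfFin hm.symm j.rev with hs
  have hanti : StrictAnti s := by
    intro j j' hjj'
    exact (F.orderEmbOfFin hm.symm).strictMono (Fin.rev_lt_rev.mpr hjj')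
  have hspos : ∀ j, 0 < s j := fun j => hFpos _ (Finset.orderEmbOfFin_mem F hm.symm _)
  have hsS : ∀ j, s j ∈ S := fun j => (hFS _ (Finset.orderEmbOfFin_mem F hm.symm _)).1
  have hlev : ∀ d ∈ F, ∃ j, s j = d := by
    intro d hd
    have : d ∈ Set.range (F.orderEmbOfFin hm.symm) := by
      rw [Finset.range_orderEmbOfFin]
      exact hd
    obtain ⟨j0, hj0⟩ := this
    refine ⟨j0.rev, ?_⟩
    rw [hs]
    simpa [Fin.rev_rev] using hj0
  -- enumerations
  obtain ⟨nX, eX, hbX, hmX⟩ := exists_enum X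
  obtain ⟨nY, eY, hbY, hmY⟩ := exists_enum Y
  set idxY : Y.U → Fin nY := fun y => (Equiv.ofBijective eY hbY).symm y with hidxY
  have heidx : ∀ y, eY (idxY y) = y := fun y => (Equiv.ofBijective eY hbY).apply_symm_apply y
  set idxX : X.U → Fin nX := fun x => (Equiv.ofBijective eX hbX).symm x with hidxX
  have heidxX : ∀ x, eX (idxX x) = x := fun x => (Equiv.ofBijective eX hbX).apply_symm_apply x
  have hmY' : ∀ (i i' : Fin nY), Y.lt (eY i) (eY i') → i < i' := by
    intro i i' h
    rcases lt_trichotomy i i' with hc | hc | hc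
    · exact hc
    · subst hc; exact absurd h (Y.lt_irrefl _)
    · exact absurd h (fun h => lt_asymm' Y h (hmY _ _ hc))
  set LL := nY + nX with hLL
  haveI : Nonempty (Fin k) := ⟨⟨0, by omega⟩⟩
  obtain ⟨N, hN⟩ := prodRamsey m nX LL ((Fin m → (Fin nX → Fin nX)) → Fin k)
  refine ⟨gridSpace m N s hanti hspos, ?_, ?_⟩
  · intro a b
    show gdist s a b ∈ S
    unfold gdist
    split
    · exact h0S
    · exact hsS _
  intro χ
  obtain ⟨HH, ii, hHH⟩ := hN (fun h => fun τ => χ (fun x => fun j => (h j).1 (τ j (idxX x))))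
  have hwYlt : ∀ (y : Y.U) (j : Fin m), wcoord Y eY (s j) (idxY y).1 < LL := fun y j =>
    lt_of_le_of_lt (wcoord_le Y eY _ _) (lt_of_lt_of_le (idxY y).2 (Nat.le_add_right _ _))
  set wY : Y.U → (Fin m → Fin N) :=
    fun y => fun j => (HH j).1 ⟨wcoord Y eY (s j) (idxY y).1, hwYlt y j⟩ with hwY
  -- coordinate difference characterization
  have hcoordiff : ∀ (y y' : Y.U), y ≠ y' → ∀ (j : Fin m),
      (wY y j = wY y' j ↔ Y.dist y y' < s j) := by
    intro y y' hne j
    have hidxne : idxY y ≠ idxY y' := fun h => hne (by rw [← heidx y, ← heidx y', h])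
    have main : ∀ (u u' : Y.U), idxY u < idxY u' →
        (wY u j = wY u' j ↔ Y.dist u u' < s j) := by
      intro u u' hlt
      have hiff := wcoord_eq_iff Y eY hmY (idxY u) (idxY u') hlt (s j) (hspos j)
      rw [heidx, heidx] at hiff
      rw [← hiff]
      constructor
      · intro h
        have := (HH j).2.injective h
        exact congrArg Fin.val this
      · intro h
        exact congrArg (HH j).1 (Fin.ext h)
    rcases lt_trichotomy (idxY y) (idxY y') with hc | hc | hc
    · exact main y y' hc
    · exact absurd hc hidxne
    · rw [eq_comm, Y.dist_comm]
      exact main y' y hc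
  have hwne : ∀ y y', y ≠ y' → wY y ≠ wY y' := by
    intro y y' hne h
    have hd0 : Y.dist y y' ≠ 0 := fun h0 => hne (Y.eq_of_dist_eq_zero _ _ h0)
    have hdF : Y.dist y y' ∈ F := by
      rw [hF, Finset.mem_filter]
      exact ⟨Finset.mem_union_right _ (Finset.mem_image.mpr ⟨(y, y'),
        Finset.mem_product.mpr ⟨Finset.mem_univ _, Finset.mem_univ _⟩, rfl⟩), hd0⟩
    obtain ⟨j0, hj0⟩ := hlev _ hdF
    have := (hcoordiff y y' hne j0).mp (congrFun h j0)
    rw [← hj0] at this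
    exact lt_irrefl _ (hj0 ▸ this)
  have hdifle : ∀ (y y' : Y.U) (hne : y ≠ y') (j : Fin m),
      (wY y j ≠ wY y' j ↔ s j ≤ Y.dist y y') := by
    intro y y' hne j
    constructor
    · intro h
      exact not_lt.mp (fun hlt => h ((hcoordiff y y' hne j).mpr hlt))
    · intro h hc
      have := (hcoordiff y y' hne j).mp hc
      linarith
  have hfdY : ∀ (y y' : Y.U) (hne : y ≠ y'),
      gdist s (wY y) (wY y') = Y.dist y y' := by
    intro y y' hne
    have hwne' := hwne y y' hne
    rw [gdist, dif_neg hwne']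
    have hd0 : Y.dist y y' ≠ 0 := fun h0 => hne (Y.eq_of_dist_eq_zero _ _ h0)
    have hdF : Y.dist y y' ∈ F := by
      rw [hF, Finset.mem_filter]
      exact ⟨Finset.mem_union_right _ (Finset.mem_image.mpr ⟨(y, y'),
        Finset.mem_product.mpr ⟨Finset.mem_univ _, Finset.mem_univ _⟩, rfl⟩), hd0⟩
    obtain ⟨j0, hj0⟩ := hlev _ hdF
    have h1 : fd (wY y) (wY y') hwne' ≤ j0 :=
      fd_min hwne' ((hdifle y y' hne j0).mpr (le_of_eq hj0))
    have h2 : s (fd (wY y) (wY y') hwne') ≤ Y.dist y y' :=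
      (hdifle y y' hne _).mp (fd_mem hwne')
    have h3 : j0 ≤ fd (wY y) (wY y') hwne' := by
      by_contra hc
      push_neg at hc
      have := hanti hc
      rw [hj0] at this
      linarith
    rw [le_antisymm h1 h3, hj0]
  have hEmbW : ConvOrdUltra.Emb Y (gridSpace m N s hanti hspos) wY := by
    refine ⟨?_, ?_, ?_⟩
    · intro y y' h
      by_contra hne
      exact hwne y y' hne h
    · intro a b
      rcases eq_or_ne a b with rfl | hne
      · rw [Y.dist_self]
        exact dif_pos rfl
      · exact hfdY a b hne
    · intro y y' hlt
      have hne : y ≠ y' := fun h => Y.lt_irrefl y (h ▸ hlt)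
      have hwne' := hwne y y' hne
      have hidxlt : idxY y < idxY y' := hmY' _ _ (by rw [heidx, heidx]; exact hlt)
      show glt (wY y) (wY y')
      refine ⟨fd (wY y) (wY y') hwne', fun j' hj' => fd_eq_below hwne' hj', ?_⟩
      set j1 := fd (wY y) (wY y') hwne' with hj1
      have hdiff := fd_mem hwne'
      have hmono2 : wcoord Y eY (s j1) (idxY y).1 ≤ wcoord Y eY (s j1) (idxY y').1 :=
        wcoord_mono Y eY _ (le_of_lt hidxlt)
      apply (HH j1).2
      rw [Fin.lt_def]
      rcases lt_or_eq_of_le hmono2 with h | h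
      · exact h
      · exfalso
        apply hdiff
        exact congrArg (HH j1).1 (Fin.ext h)
  refine ⟨wY, hEmbW, ?_⟩
  set τs : Fin m → (Fin nX → Fin nX) := fun j => fun i =>
    ⟨wcoord X eX (s j) i.1, lt_of_le_of_lt (wcoord_le X eX _ _) i.2⟩ with hτs
  refine ⟨ii τs, ?_⟩
  intro g hg
  have hgidx : ∀ (i i' : Fin nX), i < i' → idxY (g (eX i)) < idxY (g (eX i')) := by
    intro i i' h
    apply hmY'
    rw [heidx, heidx]
    exact hg.2.2 _ _ (hmX _ _ h)
  have hplat : ∀ (j : Fin m) (i i' : Fin nX),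
      (wcoord X eX (s j) i.1 = wcoord X eX (s j) i'.1 ↔
        wcoord Y eY (s j) (idxY (g (eX i))).1 = wcoord Y eY (s j) (idxY (g (eX i'))).1) := by
    intro j i i'
    have main : ∀ (i i' : Fin nX), i < i' →
        (wcoord X eX (s j) i.1 = wcoord X eX (s j) i'.1 ↔
          wcoord Y eY (s j) (idxY (g (eX i))).1 = wcoord Y eY (s j) (idxY (g (eX i'))).1) := by
      intro i i' hlt
      rw [wcoord_eq_iff X eX hmX i i' hlt (s j) (hspos j),
        wcoord_eq_iff Y eY hmY _ _ (hgidx i i' hlt) (s j) (hspos j),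
        heidx, heidx, hg.2.1]
    rcases lt_trichotomy i i' with hc | hc | hc
    · exact main i i' hc
    · subst hc; simp
    · exact ⟨fun h => ((main i' i hc).mp h.symm).symm, fun h => ((main i' i hc).mpr h.symm).symm⟩
  have hcglt : ∀ (j : Fin m) (y : Y.U), wcoord Y eY (s j) (idxY y).1 < nY :=
    fun j y => lt_of_le_of_lt (wcoord_le Y eY _ _) (idxY y).2
  set hgf : Fin m → ℕ → ℕ := fun j v =>
    if hv : ∃ i : Fin nX, wcoord X eX (s j) i.1 = v then
      wcoord Y eY (s j) (idxY (g (eX (Classical.choose hv)))).1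
    else nY + v with hhgf
  have hgf_spec : ∀ (j : Fin m) (i : Fin nX),
      hgf j (wcoord X eX (s j) i.1) = wcoord Y eY (s j) (idxY (g (eX i))).1 := by
    intro j i
    have hv : ∃ i' : Fin nX, wcoord X eX (s j) i'.1 = wcoord X eX (s j) i.1 := ⟨i, rfl⟩
    simp only [hhgf]
    rw [dif_pos hv]
    exact (hplat j (Classical.choose hv) i).mp (Classical.choose_spec hv)
  have hgfmono : ∀ (j : Fin m) (v v' : ℕ), v < v' → v' < nX → hgf j v < hgf j v' := by
    intro j v v' hvv hv'
    simp only [hhgf]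
    by_cases h1 : ∃ i : Fin nX, wcoord X eX (s j) i.1 = v
    · by_cases h2 : ∃ i : Fin nX, wcoord X eX (s j) i.1 = v'
      · rw [dif_pos h1, dif_pos h2]
        have hs1 := Classical.choose_spec h1
        have hs2 := Classical.choose_spec h2
        set i := Classical.choose h1
        set i' := Classical.choose h2
        have hii' : i < i' := by
          by_contra hc
          push_neg at hc
          have := wcoord_mono X eX (s j) (Fin.le_def.mp hc)
          omega
        have hle : wcoord Y eY (s j) (idxY (g (eX i))).1 ≤
            wcoord Y eY (s j) (idxY (g (eX i'))).1 :=
          wcoord_mono Y eY _ (Fin.le_def.mp (hgidx i i' hii').le)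
        have hne2 : wcoord Y eY (s j) (idxY (g (eX i))).1 ≠
            wcoord Y eY (s j) (idxY (g (eX i'))).1 := by
          intro hc
          have := (hplat j i i').mpr hc
          omega
        omega
      · rw [dif_pos h1, dif_neg h2]
        have := hcglt j (g (eX (Classical.choose h1)))
        omega
    · by_cases h2 : ∃ i : Fin nX, wcoord X eX (s j) i.1 = v'
      · exfalso
        obtain ⟨i', hi'⟩ := h2
        obtain ⟨i'', hle, heq⟩ := wcoord_ivt X eX (s j) i'.1 v (by omega)
        exact h1 ⟨⟨i'', lt_of_le_of_lt hle i'.2⟩, heq⟩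
      · rw [dif_neg h1, dif_neg h2]
        omega
  have hgfbound : ∀ (j : Fin m) (v : ℕ), v < nX → hgf j v < LL := by
    intro j v hv
    simp only [hhgf]
    by_cases h1 : ∃ i : Fin nX, wcoord X eX (s j) i.1 = v
    · rw [dif_pos h1]
      exact lt_of_lt_of_le (hcglt j _) (Nat.le_add_right _ _)
    · rw [dif_neg h1]
      omega
  set G : Fin m → Mono nX LL := fun j => ⟨fun i => ⟨hgf j i.1, hgfbound j i.1 i.2⟩, by
    intro a b hab
    rw [Fin.lt_def]
    exact hgfmono j a.1 b.1 (Fin.lt_def.mp hab) b.2⟩ with hG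
  have hfin := congrFun (hHH G) τs
  rw [← hfin]
  congr 1
  funext x
  funext j
  show wY (g x) j = (HH j).1 ((G j).1 (τs j (idxX x)))
  have hval : (G j).1 (τs j (idxX x)) =
      (⟨wcoord Y eY (s j) (idxY (g x)).1, hwYlt (g x) j⟩ : Fin LL) := by
    apply Fin.ext
    show hgf j (wcoord X eX (s j) (idxX x).1) = wcoord Y eY (s j) (idxY (g x)).1
    rw [hgf_spec j (idxX x), heidxX]
  rw [hval]
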